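/- Let (V, R, α ↦ α∨) be a reduced crystallographic root system with coroot lattice Q∨, and let Λ∨ ⊆ V be a lattice (a discrete subgroup spanning V) with Q∨ ⊆ Λ∨ and α(Λ∨) ⊆ ℤ for every root α. Each reflection s_α preserves Λ∨ and hence induces an automorphism s̄_α of the torus T := V/Λ∨. For a root α set K_α := { x + Λ∨ ∈ T : α(x) ∈ ℤ }. Then: (i) every element of K_α is fixed by s̄_α, i.e. K_α ⊆ T^{s̄_α} := { t ∈ T : s̄_α(t) = t }; and (ii) if moreover Λ∨/Q∨ is torsion-free, then K_α = T^{s̄_α}. -/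

import Mathlib

open Module

/-- A reduced crystallographic root system on a real vector space `V`:
the roots are a finite set of non-zero linear functionals on `V`, each root `α`
has a coroot `α∨ ∈ V` with `α(α∨) = 2`, pairings of roots with coroots are
integers, the reflections `s_α : x ↦ x - α(x)·α∨` (resp. their dual actions
`λ ↦ λ - λ(α∨)·α`) permute the coroots (resp. the roots), and the only roots
proportional to a root `α` are `±α`. -/
structure RedCrystRootSystem (V : Type*) [AddCommGroup V] [Module ℝ V] where
  R : Finset (Module.Dual ℝ V)
  coroot : Module.Dual ℝ V → V
  ne_zero : ∀ α ∈ R, α ≠ 0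
  root_coroot_two : ∀ α ∈ R, α (coroot α) = 2
  crystallographic : ∀ α ∈ R, ∀ β ∈ R, ∃ n : ℤ, β (coroot α) = (n : ℝ)
  refl_root_mem : ∀ α ∈ R, ∀ β ∈ R, β - β (coroot α) • α ∈ R
  refl_coroot_mem : ∀ α ∈ R, ∀ β ∈ R,
    ∃ γ ∈ R, coroot β - α (coroot β) • coroot α = coroot γ
  reduced : ∀ α ∈ R, ∀ β ∈ R, ∀ c : ℝ, β = c • α → β = α ∨ β = -α

namespace RedCrystRootSystem

variable {V : Type*} [AddCommGroup V] [Module ℝ V] (S : RedCrystRootSystem V)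

/-- The reflection `s_α : x ↦ x - α(x)·α∨` associated to a root `α`, as a linear map. -/
def reflMap (α : Module.Dual ℝ V) : V →ₗ[ℝ] V :=
  LinearMap.id - α.smulRight (S.coroot α)

@[simp] lemma reflMap_apply (α : Module.Dual ℝ V) (x : V) :
    S.reflMap α x = x - α x • S.coroot α := rfl

/-- A linear automorphism of `V` is a reflection of the root system if it is
given by `x ↦ x - α(x)·α∨` for some root `α`. -/
def IsReflection (e : V ≃ₗ[ℝ] V) : Prop :=
  ∃ α ∈ S.R, ∀ x : V, e x = x - α x • S.coroot α

/-- The Weyl group: the subgroup of linear automorphisms of `V` generated by the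
reflections `s_α`, `α ∈ R`. -/
def weylGroup : Subgroup (V ≃ₗ[ℝ] V) :=
  Subgroup.closure {e : V ≃ₗ[ℝ] V | S.IsReflection e}

/-- The coroot lattice `Q∨`: the additive subgroup of `V` generated by the coroots. -/
def corootLattice : AddSubgroup V :=
  AddSubgroup.closure (S.coroot '' ↑S.R)

end RedCrystRootSystem


namespace RedCrystRootSystem

variable {V : Type*} [AddCommGroup V] [Module ℝ V] (S : RedCrystRootSystem V)

lemma coroot_mem_lattice {α : Module.Dual ℝ V} (hα : α ∈ S.R) :
    S.coroot α ∈ S.corootLattice :=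
  AddSubgroup.subset_closure ⟨α, hα, rfl⟩

lemma neg_mem_R {β : Module.Dual ℝ V} (hβ : β ∈ S.R) : -β ∈ S.R := by
  have h := S.refl_root_mem β hβ β hβ
  rw [S.root_coroot_two β hβ] at h
  have h2 : β - (2 : ℝ) • β = -β := by
    rw [two_smul]; abel
  rwa [h2] at h

lemma exists_int_of_mem_lattice {γ : Module.Dual ℝ V} (hγ : γ ∈ S.R) :
    ∀ v ∈ S.corootLattice, ∃ n : ℤ, γ v = (n : ℝ) := by
  intro v hv
  have hle : S.corootLattice ≤ AddSubgroup.comap (γ : V →ₗ[ℝ] ℝ).toAddMonoidHom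
      (AddSubgroup.zmultiples (1 : ℝ)) := by
    rw [corootLattice]
    refine (AddSubgroup.closure_le _).2 ?_
    rintro _ ⟨β, hβ, rfl⟩
    obtain ⟨n, hn⟩ := S.crystallographic β hβ γ hγ
    refine AddSubgroup.mem_comap.2 (AddSubgroup.mem_zmultiples_iff.2 ⟨n, ?_⟩)
    simp [hn, zsmul_eq_mul]
  obtain ⟨n, hn⟩ := AddSubgroup.mem_zmultiples_iff.1 (AddSubgroup.mem_comap.1 (hle hv))
  refine ⟨n, ?_⟩
  simpa [zsmul_eq_mul] using hn.symm

lemma exists_even_of_mem_lattice (ℓ : Module.Dual ℝ V)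
    (hgen : ∀ γ ∈ S.R, ∃ k : ℤ, ℓ (S.coroot γ) = 2 * (k : ℝ)) :
    ∀ v ∈ S.corootLattice, ∃ k : ℤ, ℓ v = 2 * (k : ℝ) := by
  intro v hv
  have hle : S.corootLattice ≤ AddSubgroup.comap (ℓ : V →ₗ[ℝ] ℝ).toAddMonoidHom
      (AddSubgroup.zmultiples (2 : ℝ)) := by
    rw [corootLattice]
    refine (AddSubgroup.closure_le _).2 ?_
    rintro _ ⟨β, hβ, rfl⟩
    obtain ⟨k, hk⟩ := hgen β hβ
    refine AddSubgroup.mem_comap.2 (AddSubgroup.mem_zmultiples_iff.2 ⟨k, ?_⟩)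
    simp [hk, zsmul_eq_mul, mul_comm]
  obtain ⟨k, hk⟩ := AddSubgroup.mem_zmultiples_iff.1 (AddSubgroup.mem_comap.1 (hle hv))
  refine ⟨k, ?_⟩
  have : (k : ℝ) * 2 = ℓ v := by simpa [zsmul_eq_mul] using hk
  linarith


lemma key_parity (P : Finset (Module.Dual ℝ V))
    (hPR : ∀ β ∈ P, β ∈ S.R)
    (hPor : ∀ β ∈ S.R, β ∈ P ∨ -β ∈ P)
    (hPnotboth : ∀ β, β ∈ P → -β ∈ P → False)
    {θ : Module.Dual ℝ V} (hθ : θ ∈ S.R) (v : V)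
    (hvint : ∀ β ∈ S.R, ∃ n : ℤ, β v = (n : ℝ))
    (hrel : ∀ β ∈ S.R, β (S.coroot θ) * θ v = 2 * β v) :
    ∃ M N : ℤ, (∑ β ∈ P, β v) = (M : ℝ) ∧ θ v = (N : ℝ) ∧ (M : ZMod 2) = (N : ZMod 2) := by
  classical
  have hθ2 : θ (S.coroot θ) = 2 := S.root_coroot_two θ hθ
  have hθne : θ ≠ 0 := S.ne_zero θ hθ
  -- integer values
  set F : Module.Dual ℝ V → ℤ := fun β => if h : ∃ n : ℤ, β v = (n : ℝ) then h.choose else 0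
    with hFdef
  have hFval : ∀ β ∈ S.R, (F β : ℝ) = β v := by
    intro β hβ
    have h := hvint β hβ
    simp only [hFdef, dif_pos h]
    exact h.choose_spec.symm
  have hFcast : ∀ β₁ ∈ S.R, ∀ β₂ ∈ S.R, (β₂ v = β₁ v ∨ β₂ v = -(β₁ v)) →
      ((F β₂ : ZMod 2) = (F β₁ : ZMod 2)) := by
    intro β₁ h₁ β₂ h₂ h
    rcases h with h | h
    · have h' : (F β₂ : ℝ) = (F β₁ : ℝ) := by rw [hFval β₁ h₁, hFval β₂ h₂, h]
      rw [Int.cast_injective h']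
    · have h' : (F β₂ : ℝ) = ((-(F β₁) : ℤ) : ℝ) := by
        rw [hFval β₂ h₂, h, ← hFval β₁ h₁]; push_cast; ring
      rw [Int.cast_injective h', Int.cast_neg, CharTwo.neg_eq]
  -- the reflection on the dual side
  set σ : Module.Dual ℝ V → Module.Dual ℝ V := fun β => β - β (S.coroot θ) • θ with hσdef
  have hσR : ∀ β ∈ S.R, σ β ∈ S.R := fun β hβ => S.refl_root_mem θ hθ β hβ
  have hσv : ∀ β ∈ S.R, (σ β) v = -(β v) := by
    intro β hβ
    have h := hrel β hβ
    simp only [hσdef, LinearMap.sub_apply, LinearMap.smul_apply, smul_eq_mul]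
    linarith
  have hσσ : ∀ β : Module.Dual ℝ V, σ (σ β) = β := by
    intro β
    simp only [hσdef, LinearMap.sub_apply, LinearMap.smul_apply, smul_eq_mul, hθ2]
    module
  have hσneg : ∀ β : Module.Dual ℝ V, σ (-β) = -(σ β) := by
    intro β
    simp only [hσdef, LinearMap.neg_apply]
    module
  have hσθ : σ θ = -θ := by
    simp only [hσdef, hθ2]
    module
  -- the induced involution on P
  set τ : Module.Dual ℝ V → Module.Dual ℝ V := fun β => if σ β ∈ P then σ β else -(σ β)
    with hτdef
  have hτpos : ∀ β, σ β ∈ P → τ β = σ β := by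
    intro β h; simp only [hτdef]; exact if_pos h
  have hτneg : ∀ β, σ β ∉ P → τ β = -(σ β) := by
    intro β h; simp only [hτdef]; exact if_neg h
  have hτP : ∀ β ∈ P, τ β ∈ P := by
    intro β hβ
    by_cases h : σ β ∈ P
    · rw [hτpos β h]; exact h
    · rcases hPor (σ β) (hσR β (hPR β hβ)) with h' | h'
      · exact absurd h' h
      · rw [hτneg β h]; exact h'
  have hτR : ∀ β ∈ P, τ β ∈ S.R := fun β hβ => hPR _ (hτP β hβ)
  have hτv : ∀ β ∈ P, (τ β) v = β v ∨ (τ β) v = -(β v) := by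
    intro β hβ
    by_cases h : σ β ∈ P
    · right; rw [hτpos β h]; exact hσv β (hPR β hβ)
    · left; rw [hτneg β h, LinearMap.neg_apply, hσv β (hPR β hβ), neg_neg]
  have hτpar : ∀ β ∈ P, (F (τ β) : ZMod 2) = (F β : ZMod 2) := by
    intro β hβ
    exact hFcast β (hPR β hβ) (τ β) (hτR β hβ) (hτv β hβ)
  have hττ : ∀ β ∈ P, τ (τ β) = β := by
    intro β hβ
    have hσττ : σ (τ β) = β ∨ σ (τ β) = -β := by
      by_cases h : σ β ∈ P
      · rw [hτpos β h, hσσ]; exact Or.inl rfl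
      · rw [hτneg β h, hσneg, hσσ]; exact Or.inr rfl
    rcases hσττ with h | h
    · by_cases h' : σ (τ β) ∈ P
      · rw [hτpos _ h']; exact h
      · exact absurd (by rw [h]; exact hβ) h'
    · by_cases h' : σ (τ β) ∈ P
      · exfalso; exact hPnotboth β hβ (by rw [← h]; exact h')
      · rw [hτneg _ h', h, neg_neg]
  -- base point: the representative of ±θ in P
  set β₀ : Module.Dual ℝ V := if θ ∈ P then θ else -θ with hβ₀def
  have hβ₀pos : θ ∈ P → β₀ = θ := fun h => by rw [hβ₀def, if_pos h]
  have hβ₀neg : θ ∉ P → β₀ = -θ := fun h => by rw [hβ₀def, if_neg h]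
  have hβ₀P : β₀ ∈ P := by
    by_cases h : θ ∈ P
    · rw [hβ₀pos h]; exact h
    · rw [hβ₀neg h]
      rcases hPor θ hθ with h' | h'
      · exact absurd h' h
      · exact h'
  have hβ₀R : β₀ ∈ S.R := hPR β₀ hβ₀P
  have hβ₀v : β₀ v = θ v ∨ β₀ v = -(θ v) := by
    by_cases h : θ ∈ P
    · rw [hβ₀pos h]; exact Or.inl rfl
    · rw [hβ₀neg h, LinearMap.neg_apply]; exact Or.inr rfl
  have hσβ₀ : σ β₀ = -β₀ := by
    by_cases h : θ ∈ P
    · rw [hβ₀pos h]; exact hσθ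
    · rw [hβ₀neg h, hσneg, hσθ, neg_neg]
  have hτβ₀ : τ β₀ = β₀ := by
    have hnot : σ β₀ ∉ P := by
      rw [hσβ₀]; intro h; exact hPnotboth β₀ hβ₀P h
    rw [hτneg β₀ hnot, hσβ₀, neg_neg]
  -- the sum over P minus the base point vanishes mod 2
  have hsum0 : ∑ β ∈ P.erase β₀, ((F β : ZMod 2)) = 0 := by
    refine Finset.sum_involution (fun β _ => τ β) ?_ ?_ ?_ ?_
    · intro β hβ
      show (F β : ZMod 2) + (F (τ β) : ZMod 2) = 0
      rw [hτpar β (Finset.mem_of_mem_erase hβ), CharTwo.add_self_eq_zero]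
    · -- no fixed points with nonzero value
      intro β hβ hfβ hτβ
      have hτβ' : τ β = β := hτβ
      have hβP := Finset.mem_of_mem_erase hβ
      have hβR := hPR β hβP
      have hβne := Finset.ne_of_mem_erase hβ
      have hσβ : σ β = β ∨ σ β = -β := by
        by_cases h : σ β ∈ P
        · rw [hτpos β h] at hτβ'; exact Or.inl hτβ'
        · rw [hτneg β h] at hτβ'
          exact Or.inr (neg_eq_iff_eq_neg.mp hτβ')
      rcases hσβ with h | h
      · -- β(θ∨) = 0 hence β v = 0
        have hc0 : β (S.coroot θ) = 0 := by
          have h' : β (S.coroot θ) • θ = 0 := by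
            have h'' : β - β (S.coroot θ) • θ = β := by simpa only [hσdef] using h
            exact sub_eq_self.1 h''
          rcases smul_eq_zero.1 h' with h'' | h''
          · exact h''
          · exact absurd h'' hθne
        have hv0 : β v = 0 := by
          have h3 := hrel β hβR
          rw [hc0] at h3
          simpa using h3.symm
        have h4 : (F β : ℝ) = 0 := by rw [hFval β hβR, hv0]
        have hF0 : F β = 0 := by exact_mod_cast h4
        rw [hF0] at hfβ
        simp at hfβ
      · -- 2β = β(θ∨)θ so β = ±θ, contradicting β ≠ β₀
        have h' : β = -β + β (S.coroot θ) • θ :=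
          sub_eq_iff_eq_add.mp (by simpa only [hσdef] using h)
        have hββ : β + β = β (S.coroot θ) • θ := by
          calc β + β = (-β + β (S.coroot θ) • θ) + β := by rw [← h']
            _ = β (S.coroot θ) • θ := by abel
        have hβeq : β = ((2 : ℝ)⁻¹ * β (S.coroot θ)) • θ := by
          have h2 : (2 : ℝ) • β = β (S.coroot θ) • θ := by rw [two_smul]; exact hββ
          calc β = (2 : ℝ)⁻¹ • ((2 : ℝ) • β) := by rw [smul_smul]; norm_num
            _ = ((2 : ℝ)⁻¹ * β (S.coroot θ)) • θ := by rw [h2, smul_smul]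
        rcases S.reduced θ hθ β hβR _ hβeq with h' | h'
        · have hθP : θ ∈ P := h' ▸ hβP
          exact hβne (by rw [h', ← hβ₀pos hθP])
        · have hθP : θ ∉ P := by
            intro hc
            refine hPnotboth θ hc ?_
            rw [← h']; exact hβP
          exact hβne (by rw [h', ← hβ₀neg hθP])
    · intro β hβ
      show τ β ∈ P.erase β₀
      have hβP := Finset.mem_of_mem_erase hβ
      refine Finset.mem_erase.2 ⟨?_, hτP β hβP⟩
      intro hc
      have h1 : τ (τ β) = τ β₀ := by rw [hc]
      rw [hττ β hβP, hτβ₀] at h1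
      exact Finset.ne_of_mem_erase hβ h1
    · intro β hβ
      show τ (τ β) = β
      exact hττ β (Finset.mem_of_mem_erase hβ)
  -- assemble
  refine ⟨∑ β ∈ P, F β, F θ, ?_, (hFval θ hθ).symm, ?_⟩
  · rw [Int.cast_sum]
    exact (Finset.sum_congr rfl fun β hβ => (hFval β (hPR β hβ)).symm)
  · rw [Int.cast_sum, ← Finset.add_sum_erase _ _ hβ₀P, hsum0, add_zero]
    exact hFcast θ hθ β₀ hβ₀R hβ₀v


/-- In a reduced crystallographic root system, half a coroot never lies in the
coroot lattice. (Stated via `z + z = α∨`.) -/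
lemma not_half_coroot_mem {α : Module.Dual ℝ V} (hα : α ∈ S.R)
    {z : V} (hz : z ∈ S.corootLattice) (hzz : z + z = S.coroot α) : False := by
  classical
  have hα2 : α (S.coroot α) = 2 := S.root_coroot_two α hα
  have hαz : α z = 1 := by
    have h2 : α z + α z = 2 := by rw [← map_add, hzz]; exact hα2
    linarith
  -- a set of representatives of the pairs {±β} of roots
  set P : Finset (Module.Dual ℝ V) := S.R.filter (fun β => WellOrderingRel β (-β)) with hPdef
  have hPR : ∀ β ∈ P, β ∈ S.R := fun β hβ => (Finset.mem_filter.1 hβ).1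
  have hne : ∀ β ∈ S.R, β ≠ -β := by
    intro β hβ h
    have h0 : β + β = 0 := by nth_rewrite 2 [h]; simp
    have h2 : (2 : ℝ) • β = 0 := by rw [two_smul]; exact h0
    rcases smul_eq_zero.1 h2 with h' | h'
    · norm_num at h'
    · exact S.ne_zero β hβ h'
  have hPor : ∀ β ∈ S.R, β ∈ P ∨ -β ∈ P := by
    intro β hβ
    rcases trichotomous_of WellOrderingRel β (-β) with h | h | h
    · exact Or.inl (Finset.mem_filter.2 ⟨hβ, h⟩)
    · exact absurd h (hne β hβ)
    · exact Or.inr (Finset.mem_filter.2 ⟨S.neg_mem_R hβ, by rwa [neg_neg]⟩)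
  have hPnotboth : ∀ β, β ∈ P → -β ∈ P → False := by
    intro β h1 h2
    have r1 := (Finset.mem_filter.1 h1).2
    have r2 := (Finset.mem_filter.1 h2).2
    rw [neg_neg] at r2
    exact irrefl_of WellOrderingRel β (trans_of WellOrderingRel r1 r2)
  -- the functional ℓ = sum of the elements of P
  set ℓ : Module.Dual ℝ V := ∑ β ∈ P, β with hℓdef
  have hℓapp : ∀ w : V, ℓ w = ∑ β ∈ P, β w := by
    intro w; rw [hℓdef]; exact LinearMap.sum_apply _ _ _
  -- ℓ is even on the coroot lattice
  have hgen : ∀ γ ∈ S.R, ∃ k : ℤ, ℓ (S.coroot γ) = 2 * (k : ℝ) := by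
    intro γ hγ
    obtain ⟨M, N, hM, hN, hpar⟩ := S.key_parity P hPR hPor hPnotboth hγ (S.coroot γ)
      (fun β hβ => S.crystallographic γ hγ β hβ)
      (fun β hβ => by rw [S.root_coroot_two γ hγ]; ring)
    have hN2 : (N : ℝ) = 2 := by rw [← hN, S.root_coroot_two γ hγ]
    have hN2' : N = 2 := by exact_mod_cast hN2
    have hM0 : (M : ZMod 2) = 0 := by
      rw [hpar, hN2']
      exact (ZMod.intCast_zmod_eq_zero_iff_dvd 2 2).2 ⟨1, by ring⟩
    obtain ⟨k, hk⟩ := (ZMod.intCast_zmod_eq_zero_iff_dvd M 2).1 hM0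
    refine ⟨k, ?_⟩
    rw [hℓapp, hM, hk]
    push_cast; ring
  obtain ⟨k, hk⟩ := S.exists_even_of_mem_lattice ℓ hgen z hz
  -- but the parity of ℓ z is odd
  obtain ⟨M, N, hM, hN, hpar⟩ := S.key_parity P hPR hPor hPnotboth hα z
    (fun β hβ => S.exists_int_of_mem_lattice hβ z hz)
    (fun β hβ => by
      have hβc : β (S.coroot α) = β z + β z := by rw [← hzz, map_add]
      rw [hβc, hαz]; ring)
  have hN1 : N = 1 := by
    have : (N : ℝ) = 1 := by rw [← hN, hαz]
    exact_mod_cast this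
  have hModd : (M : ZMod 2) = 1 := by rw [hpar, hN1]; norm_num
  have hMeven : (M : ZMod 2) = 0 := by
    have h1 : (M : ℝ) = 2 * (k : ℝ) := by rw [← hM, ← hℓapp, hk]
    have h2 : M = 2 * k := by exact_mod_cast h1
    rw [h2]
    exact (ZMod.intCast_zmod_eq_zero_iff_dvd _ 2).2 ⟨k, by ring⟩
  rw [hModd] at hMeven
  exact one_ne_zero hMeven


end RedCrystRootSystem

/-- `e` fixes the point `t` of the torus `V ⧸ Λ`. This is expressed by asking for an
additive endomorphism of `V ⧸ Λ` covering `e` (which exists iff `e` preserves `Λ`,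
and is then unique) fixing `t`. -/
def FixesInTorus {V : Type*} [AddCommGroup V] [Module ℝ V]
    (Λ : AddSubgroup V) (e : V ≃ₗ[ℝ] V) (t : V ⧸ Λ) : Prop :=
  ∃ f : (V ⧸ Λ) →+ (V ⧸ Λ),
    (∀ x : V, f (QuotientAddGroup.mk x) = QuotientAddGroup.mk (e x)) ∧ f t = t

/-- Let `(V, R, α ↦ α∨)` be a reduced crystallographic root system with
coroot lattice `Q∨ ⊆ Λ∨ ⊆ V`, where `Λ∨` is a lattice (the ℤ-span of an ℝ-basis of `V`)
with `α(Λ∨) ⊆ ℤ` for all roots `α`.  Each reflection `s_α` preserves `Λ∨`, hence induces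
an automorphism `s̄_α` of the torus `T = V ⧸ Λ∨`.  With
`K_α = { x + Λ∨ : α(x) ∈ ℤ }` one has: (i) `K_α ⊆ T^{s̄_α}`; and (ii) if `Λ∨/Q∨` is
torsion-free then `K_α = T^{s̄_α}`. -/
theorem statement1 {V : Type*} [AddCommGroup V] [Module ℝ V] [FiniteDimensional ℝ V]
    (S : RedCrystRootSystem V) (Λ : AddSubgroup V)
    (hlat : ∃ b : Basis (Fin (Module.finrank ℝ V)) ℝ V,
      Λ = AddSubgroup.closure (Set.range ⇑b))
    (hQΛ : S.corootLattice ≤ Λ)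
    (hint : ∀ α ∈ S.R, ∀ v ∈ Λ, ∃ n : ℤ, α v = (n : ℝ))
    (α : Module.Dual ℝ V) (hα : α ∈ S.R) :
    -- `s_α` preserves `Λ∨` ...
    (∀ v ∈ Λ, S.reflMap α v ∈ Λ) ∧
    -- ... hence induces an automorphism `s̄_α` of `T = V ⧸ Λ∨`; for any additive map
    -- `s̄` of `T` covering `s_α`:
    ∀ sbar : (V ⧸ Λ) →+ (V ⧸ Λ),
      (∀ x : V, sbar (QuotientAddGroup.mk x) = QuotientAddGroup.mk (S.reflMap α x)) →
      -- (i) every element of `K_α` is fixed by `s̄_α`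
      ({t : V ⧸ Λ | ∃ x : V, QuotientAddGroup.mk x = t ∧ ∃ n : ℤ, α x = (n : ℝ)} ⊆
        {t : V ⧸ Λ | sbar t = t}) ∧
      -- (ii) if `Λ∨/Q∨` is torsion-free then `K_α = T^{s̄_α}`
      ((∀ g : ↥Λ ⧸ (S.corootLattice.addSubgroupOf Λ), g ≠ 0 → ¬IsOfFinAddOrder g) →
        {t : V ⧸ Λ | ∃ x : V, QuotientAddGroup.mk x = t ∧ ∃ n : ℤ, α x = (n : ℝ)} =
          {t : V ⧸ Λ | sbar t = t}) := by
  have hcoΛ : S.coroot α ∈ Λ := hQΛ (S.coroot_mem_lattice hα)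
  have hα2 : α (S.coroot α) = 2 := S.root_coroot_two α hα
  -- `s_α` preserves the lattice
  have hpres : ∀ v ∈ Λ, S.reflMap α v ∈ Λ := by
    intro v hv
    obtain ⟨n, hn⟩ := hint α hα v hv
    have hsm : α v • S.coroot α ∈ Λ := by
      rw [hn, Int.cast_smul_eq_zsmul]
      exact AddSubgroup.zsmul_mem Λ hcoΛ n
    rw [S.reflMap_apply]
    exact sub_mem hv hsm
  refine ⟨hpres, ?_⟩
  intro sbar hsbar
  -- (i)
  have hKsub : {t : V ⧸ Λ | ∃ x : V, QuotientAddGroup.mk x = t ∧ ∃ n : ℤ, α x = (n : ℝ)} ⊆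
      {t : V ⧸ Λ | sbar t = t} := by
    rintro t ⟨x, rfl, n, hn⟩
    show sbar (QuotientAddGroup.mk x) = QuotientAddGroup.mk x
    rw [hsbar x]
    have hrw : -(S.reflMap α x) + x = α x • S.coroot α := by
      rw [S.reflMap_apply]; abel
    rw [QuotientAddGroup.eq, hrw, hn, Int.cast_smul_eq_zsmul]
    exact AddSubgroup.zsmul_mem Λ hcoΛ n
  refine ⟨hKsub, ?_⟩
  -- (ii)
  intro htf
  refine Set.Subset.antisymm hKsub ?_
  intro t ht
  obtain ⟨x, rfl⟩ := QuotientAddGroup.mk_surjective t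
  have hfix : (QuotientAddGroup.mk (S.reflMap α x) : V ⧸ Λ) = QuotientAddGroup.mk x := by
    rw [← hsbar x]; exact ht
  have hmem : α x • S.coroot α ∈ Λ := by
    have h1 := QuotientAddGroup.eq.1 hfix
    have hrw : -(S.reflMap α x) + x = α x • S.coroot α := by
      rw [S.reflMap_apply]; abel
    rwa [hrw] at h1
  obtain ⟨n, hn⟩ := hint α hα _ hmem
  have h2 : α x * 2 = (n : ℝ) := by
    rw [map_smul, smul_eq_mul, hα2] at hn
    exact hn
  rcases Int.even_or_odd n with ⟨m, hm⟩ | ⟨m, hm⟩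
  · -- even case: α x is an integer
    refine ⟨x, rfl, m, ?_⟩
    have hm' : (n : ℝ) = (m : ℝ) + (m : ℝ) := by exact_mod_cast congrArg (Int.cast : ℤ → ℝ) hm
    linarith
  · -- odd case: contradiction with torsion-freeness
    exfalso
    have hm' : (n : ℝ) = 2 * (m : ℝ) + 1 := by exact_mod_cast congrArg (Int.cast : ℤ → ℝ) hm
    set w : V := α x • S.coroot α - m • S.coroot α with hwdef
    have hwΛ : w ∈ Λ := sub_mem hmem (AddSubgroup.zsmul_mem Λ hcoΛ m)
    have hww : w + w = S.coroot α := by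
      rw [hwdef, ← Int.cast_smul_eq_zsmul ℝ m (S.coroot α), ← sub_smul, ← add_smul]
      have h3 : α x - (m : ℝ) + (α x - (m : ℝ)) = 1 := by linarith
      rw [h3, one_smul]
    set Wl : ↥Λ := ⟨w, hwΛ⟩ with hWl
    have hWW : Wl + Wl = (⟨S.coroot α, hcoΛ⟩ : ↥Λ) := Subtype.ext hww
    set ξ : ↥Λ ⧸ (S.corootLattice.addSubgroupOf Λ) := QuotientAddGroup.mk Wl with hξdef
    have hξξ : ξ + ξ = 0 := by
      rw [hξdef, ← QuotientAddGroup.mk_add, hWW, QuotientAddGroup.eq_zero_iff]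
      exact (AddSubgroup.mem_addSubgroupOf).2 (S.coroot_mem_lattice hα)
    have hξ0 : ξ = 0 := by
      by_contra hne
      refine htf ξ hne ?_
      refine isOfFinAddOrder_iff_nsmul_eq_zero.2 ⟨2, two_pos, ?_⟩
      rw [two_nsmul]
      exact hξξ
    have hwQ : w ∈ S.corootLattice := by
      have h4 : Wl ∈ S.corootLattice.addSubgroupOf Λ := by
        rw [← QuotientAddGroup.eq_zero_iff, ← hξdef]
        exact hξ0
      exact (AddSubgroup.mem_addSubgroupOf).1 h4
    exact S.not_half_coroot_mem hα hwQ hww
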